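/- Let ‖·‖ be a norm on ℝ^d and let P be a d-polytope in ℝ^d that is subequilateral with respect to ‖·‖. Then P is edge-antipodal: for any two vertices x and y of P joined by an edge there exist two parallel hyperplanes, one through x and one through y, such that P is contained in the closed slab bounded by the two hyperplanes. -/

import Mathlib

open Pointwise

/-- `N` is a norm on the real vector space `E`. -/
def IsNorm {E : Type*} [AddCommGroup E] [Module ℝ E] (N : E → ℝ) : Prop :=
  (∀ x, N x = 0 ↔ x = 0) ∧ (∀ (a : ℝ) (x : E), N (a • x) = |a| * N x) ∧
  (∀ x y, N (x + y) ≤ N x + N y)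

/-- The segment `[x, y]` is an edge (a 1-dimensional face) of `P`. -/
def IsEdge {E : Type*} [AddCommGroup E] [Module ℝ E] (P : Set E) (x y : E) : Prop :=
  x ≠ y ∧ IsExtreme ℝ P (segment ℝ x y)

/-- The diameter of a set `P` with respect to the norm `N`. -/
noncomputable def polyDiam {E : Type*} [AddCommGroup E] (N : E → ℝ) (P : Set E) : ℝ :=
  sSup {r | ∃ x ∈ P, ∃ y ∈ P, N (x - y) = r}

/-- The minimum pairwise distance of a finite set `V` with respect to the norm `N`. -/
noncomputable def minPairDist {E : Type*} [AddCommGroup E] (N : E → ℝ) (V : Finset E) : ℝ :=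
  sInf {r | ∃ x ∈ V, ∃ y ∈ V, x ≠ y ∧ N (x - y) = r}

/-- The functional `λ(V; N) = diam(V) / min pairwise distance`. -/
noncomputable def lamV {E : Type*} [AddCommGroup E] (N : E → ℝ) (V : Finset E) : ℝ :=
  polyDiam N (V : Set E) / minPairDist N V

/-- `P` is subequilateral with respect to `N`: every edge has length the diameter of `P`. -/
def Subequilateral {E : Type*} [AddCommGroup E] [Module ℝ E] (N : E → ℝ) (P : Set E) : Prop :=
  ∀ x y, IsEdge P x y → N (x - y) = polyDiam N P

/-- There are two parallel hyperplanes, one through `x` and one through `y`, such that `P`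
lies in the closed slab bounded by them. -/
def InSlab {E : Type*} [AddCommGroup E] [Module ℝ E] (P : Set E) (x y : E) : Prop :=
  ∃ f : E →ₗ[ℝ] ℝ, f ≠ 0 ∧ ∀ z ∈ P, min (f x) (f y) ≤ f z ∧ f z ≤ max (f x) (f y)

/-- `P` is edge-antipodal. -/
def EdgeAntipodal {E : Type*} [AddCommGroup E] [Module ℝ E] (P : Set E) : Prop :=
  ∀ x y, IsEdge P x y → InSlab P x y

/-- `P` is antipodal. -/
def Antipodal {E : Type*} [AddCommGroup E] [Module ℝ E] (P : Set E) : Prop :=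
  ∀ x ∈ Set.extremePoints ℝ P, ∀ y ∈ Set.extremePoints ℝ P, x ≠ y → InSlab P x y

/-- The relative norm determined by `P`, i.e. the norm with unit ball `P - P`. -/
noncomputable def relNorm {E : Type*} [AddCommGroup E] [Module ℝ E] (P : Set E) : E → ℝ :=
  gauge (P - P)


section Aux
variable {E : Type*} [AddCommGroup E] [Module ℝ E] {N : E → ℝ}

lemma IsNorm.nonneg (hN : IsNorm N) (x : E) : 0 ≤ N x := by
  have h0 : N (0:E) = 0 := (hN.1 0).2 rfl
  have hneg : N (-x) = N x := by
    have := hN.2.1 (-1) x; simpa using this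
  have := hN.2.2 x (-x)
  rw [add_neg_cancel, h0, hneg] at this
  linarith

lemma IsNorm.dual (hN : IsNorm N) {v : E} (hv : v ≠ 0) :
    ∃ f : E →ₗ[ℝ] ℝ, f v = N v ∧ ∀ w, f w ≤ N w := by
  set p := LinearPMap.mkSpanSingleton (K := ℝ) (L := ℝ) (σ := RingHom.id ℝ) v (N v) hv with hp
  obtain ⟨g, hg1, hg2⟩ := exists_extension_of_le_sublinear p N
    (fun c hc x => by rw [hN.2.1, abs_of_pos hc])
    hN.2.2
    (by
      rintro ⟨x, hx⟩
      obtain ⟨c, rfl⟩ := Submodule.mem_span_singleton.1 hx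
      have : p ⟨c • v, hx⟩ = c • N v := LinearPMap.mkSpanSingleton'_apply _ _ _ c hx
      rw [this, hN.2.1, smul_eq_mul]
      have : c ≤ |c| := le_abs_self c
      have hnn := hN.nonneg v
      nlinarith)
  refine ⟨g, ?_, hg2⟩
  have hmem : v ∈ p.domain := Submodule.mem_span_singleton_self v
  have := hg1 ⟨v, hmem⟩
  rw [LinearPMap.mkSpanSingleton_apply] at this
  exact this

lemma IsNorm.convexOn (hN : IsNorm N) : ConvexOn ℝ Set.univ N := by
  refine ⟨convex_univ, ?_⟩
  intro x _ y _ a b ha hb _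
  calc N (a • x + b • y) ≤ N (a • x) + N (b • y) := hN.2.2 _ _
    _ = a * N x + b * N y := by rw [hN.2.1, hN.2.1, abs_of_nonneg ha, abs_of_nonneg hb]

end Aux

/-- A `d`-polytope that is subequilateral with respect to a norm `N` on `ℝ^d`
is edge-antipodal. -/
theorem subequilateral_edgeAntipodal (d : ℕ)
    (N : (Fin d → ℝ) → ℝ) (hN : IsNorm N)
    (V : Finset (Fin d → ℝ)) (P : Set (Fin d → ℝ))
    (hP : P = convexHull ℝ (V : Set (Fin d → ℝ)))
    (hdim : affineSpan ℝ P = ⊤)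
    (hsub : Subequilateral N P) :
    EdgeAntipodal P := by
  intro x y hxy
  obtain ⟨hne, hext⟩ := hxy
  have hxP : x ∈ P := hext.1 (left_mem_segment ℝ x y)
  have hyP : y ∈ P := hext.1 (right_mem_segment ℝ x y)
  have hvne : x - y ≠ 0 := sub_ne_zero.2 hne
  obtain ⟨f, hfv, hfle⟩ := hN.dual hvne
  have hVne' : V.Nonempty := by
    rcases V.eq_empty_or_nonempty with h | h
    · subst h; rw [hP] at hxP; simp at hxP
    · exact h
  set M := V.sup' hVne' N with hM
  have hMb : ∀ a ∈ P, N a ≤ M := by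
    intro a ha
    rw [hP] at ha
    obtain ⟨w, hw, hle⟩ := (hN.convexOn).exists_ge_of_mem_convexHull (Set.subset_univ _) ha
    exact hle.trans (Finset.le_sup' N hw)
  have hnegN : ∀ b : Fin d → ℝ, N (-b) = N b := fun b => by
    have := hN.2.1 (-1) b; simpa using this
  have hbound : ∀ a ∈ P, ∀ b ∈ P, N (a - b) ≤ 2 * M := by
    intro a ha b hb
    have h1 := hN.2.2 a (-b)
    rw [hnegN] at h1
    have := hMb a ha
    have := hMb b hb
    have : N (a - b) = N (a + -b) := by rw [sub_eq_add_neg]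
    linarith [hMb a ha, hMb b hb, this ▸ h1]
  have hbdd : BddAbove {r | ∃ a ∈ P, ∃ b ∈ P, N (a - b) = r} := by
    refine ⟨2 * M, ?_⟩
    rintro r ⟨a, ha, b, hb, rfl⟩
    exact hbound a ha b hb
  have hle_diam : ∀ a ∈ P, ∀ b ∈ P, N (a - b) ≤ polyDiam N P := by
    intro a ha b hb
    exact le_csSup hbdd ⟨a, ha, b, hb, rfl⟩
  have hdiam : N (x - y) = polyDiam N P := hsub x y ⟨hne, hext⟩
  refine ⟨f, ?_, ?_⟩
  · intro h0
    have h1 : f (x - y) = 0 := by rw [h0]; rfl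
    rw [hfv] at h1
    exact hvne ((hN.1 _).1 h1)
  · intro z hz
    have h1 : f z - f y ≤ f x - f y := by
      have ha : f (z - y) ≤ N (z - y) := hfle (z - y)
      have hb : N (z - y) ≤ polyDiam N P := hle_diam z hz y hyP
      have hc : f (x - y) = polyDiam N P := by rw [hfv, hdiam]
      simp only [map_sub] at ha hc
      linarith
    have h2 : f x - f z ≤ f x - f y := by
      have ha : f (x - z) ≤ N (x - z) := hfle (x - z)
      have hb : N (x - z) ≤ polyDiam N P := hle_diam x hxP z hz
      have hc : f (x - y) = polyDiam N P := by rw [hfv, hdiam]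
      simp only [map_sub] at ha hc
      linarith
    constructor
    · exact (min_le_right _ _).trans (by linarith)
    · exact (by linarith : f z ≤ f x).trans (le_max_left _ _)
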